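/- The Fibonacci-Lyndon words f_n, defined by f₀ = x, f₁ = y, f_{2n} = f_{2n−2} f_{2n−1} and f_{2n+1} = f_{2n} f_{2n−1} for n ≥ 1, are all Lyndon words over {x < y}, the length of f_n is the n-th Fibonacci number, and in the lexicographic order they satisfy f₀ < f₂ < ⋯ < f_{2n} < ⋯ < f_{2n+1} < ⋯ < f₃ < f₁. -/
import Mathlib

section
variable {X : Type*} [LinearOrder X]

/-- `u` is lexicographically smaller than `v` with a strict difference at some
position present in both words. -/
def Slt (u v : List X) : Prop :=
  ∃ p : List X, ∃ c c' : X, ∃ s t : List X,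
    c < c' ∧ u = p ++ c :: s ∧ v = p ++ c' :: t

lemma Slt.lex {u v : List X} (h : Slt u v) : List.Lex (· < ·) u v := by
  obtain ⟨p, c, c', s, t, hcc, rfl, rfl⟩ := h
  induction p with
  | nil => exact List.Lex.rel hcc
  | cons a p ih => exact List.Lex.cons ih

lemma Slt.append {u v : List X} (h : Slt u v) (s' t' : List X) :
    Slt (u ++ s') (v ++ t') := by
  obtain ⟨p, c, c', s, t, hcc, rfl, rfl⟩ := h
  exact ⟨p, c, c', s ++ s', t ++ t', hcc, by simp, by simp⟩

lemma Slt.prepend (p : List X) {u v : List X} (h : Slt u v) :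
    Slt (p ++ u) (p ++ v) := by
  obtain ⟨q, c, c', s, t, hcc, rfl, rfl⟩ := h
  exact ⟨p ++ q, c, c', s, t, hcc, by simp, by simp⟩

lemma slt_irrefl (u : List X) : ¬ Slt u u := by
  rintro ⟨p, c, c', s, t, hcc, h1, h2⟩
  rw [h1] at h2
  have := List.append_cancel_left h2
  exact absurd (List.head_eq_of_cons_eq this ▸ hcc) (lt_irrefl c)

lemma Slt.trans {u v w : List X} (h1 : Slt u v) (h2 : Slt v w) : Slt u w := by
  obtain ⟨p1, c1, d1, s1, t1, hlt1, hu, hv1⟩ := h1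
  obtain ⟨p2, c2, d2, s2, t2, hlt2, hv2, hw⟩ := h2
  rw [hv1] at hv2
  rcases List.append_eq_append_iff.mp hv2 with ⟨k, hk1, hk2⟩ | ⟨k, hk1, hk2⟩
  · -- p2 = p1 ++ k, d1 :: t1 = k ++ c2 :: s2
    rcases k with _ | ⟨e, k'⟩
    · simp at hk1 hk2
      obtain ⟨he, ht⟩ := hk2
      exact ⟨p1, c1, d2, s1, t2, lt_trans (he ▸ hlt1) hlt2, hu, by rw [hw, hk1]⟩
    · obtain ⟨he, ht⟩ := List.cons_eq_cons.mp hk2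
      exact ⟨p1, c1, d1, s1, k' ++ d2 :: t2, hlt1, hu, by
        rw [hw, hk1, he]; simp⟩
  · -- p1 = p2 ++ k, c2 :: s2 = k ++ d1 :: t1
    rcases k with _ | ⟨e, k'⟩
    · simp at hk1 hk2
      obtain ⟨he, ht⟩ := hk2
      exact ⟨p1, c1, d2, s1, t2, lt_trans (he.symm ▸ hlt1) hlt2, hu, by rw [hw, hk1]⟩
    · obtain ⟨he, ht⟩ := List.cons_eq_cons.mp hk2
      exact ⟨p2, c2, d2, k' ++ c1 :: s1, t2, hlt2, by rw [hu, hk1, he]; simp, hw⟩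

lemma lex_irrefl : ∀ u : List X, ¬ List.Lex (· < ·) u u
  | [] => by intro h; cases h
  | a :: u => by
      intro h
      cases h with
      | cons h => exact lex_irrefl u h
      | rel h => exact absurd h (lt_irrefl a)

lemma lex_append_right (u : List X) {w : List X} (hw : w ≠ []) :
    List.Lex (· < ·) u (u ++ w) := by
  induction u with
  | nil =>
      cases w with
      | nil => exact absurd rfl hw
      | cons a w => exact List.Lex.nil
  | cons a u ih => exact List.Lex.cons ih

lemma lex_prepend (p : List X) {u v : List X} (h : List.Lex (· < ·) u v) :
    List.Lex (· < ·) (p ++ u) (p ++ v) := by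
  induction p with
  | nil => exact h
  | cons a p ih => exact List.Lex.cons ih

lemma lex_of_prepend : ∀ (p : List X) {u v : List X},
    List.Lex (· < ·) (p ++ u) (p ++ v) → List.Lex (· < ·) u v := by
  intro p
  induction p with
  | nil => intro u v h; exact h
  | cons a p ih =>
      intro u v h
      cases h with
      | cons h => exact ih h
      | rel h => exact absurd h (lt_irrefl a)

lemma lex_cases {u v : List X} (h : List.Lex (· < ·) u v) :
    Slt u v ∨ ∃ w, w ≠ [] ∧ v = u ++ w := by
  induction h with
  | @nil b l => exact Or.inr ⟨b :: l, List.cons_ne_nil _ _, rfl⟩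
  | @cons a l₁ l₂ h ih =>
      rcases ih with ⟨p, c, c', s, t, h1, h2, h3⟩ | ⟨w, hw, hv⟩
      · exact Or.inl ⟨a :: p, c, c', s, t, h1, by simp [h2], by simp [h3]⟩
      · exact Or.inr ⟨w, hw, by simp [hv]⟩
  | @rel a l₁ b l₂ h => exact Or.inl ⟨[], a, b, l₁, l₂, h, rfl, rfl⟩

lemma slt_or_eq_of_lex_append : ∀ {u z : List X} (v w : List X),
    u.length = z.length → List.Lex (· < ·) (u ++ v) (z ++ w) →
    Slt u z ∨ u = z := by
  intro u
  induction u with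
  | nil =>
      intro z v w hl _
      have : z = [] := List.length_eq_zero_iff.mp hl.symm
      exact Or.inr this.symm
  | cons a u ih =>
      intro z v w hl hlex
      cases z with
      | nil => simp at hl
      | cons b z =>
          cases hlex with
          | cons h =>
              rcases ih (z := z) v w (by simpa using hl) h with h' | h'
              · obtain ⟨p, c, c', s, t, h1, h2, h3⟩ := h'
                exact Or.inl ⟨a :: p, c, c', s, t, h1, by simp [h2], by simp [h3]⟩
              · exact Or.inr (by rw [h'])
          | rel h => exact Or.inl ⟨[], a, b, u, z, h, rfl, rfl⟩

end
/-- A Lyndon word: a nonempty word strictly lexicographically smaller than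
all of its proper cyclic rotations. -/
def IsLyndon {X : Type*} [LinearOrder X] (w : List X) : Prop :=
  w ≠ [] ∧ ∀ a b : List X, a ≠ [] → b ≠ [] → w = a ++ b →
    List.Lex (· < ·) w (b ++ a)

section
variable {X : Type*} [LinearOrder X]

lemma isLyndon_singleton (c : X) : IsLyndon [c] := by
  refine ⟨by simp, ?_⟩
  intro a b ha hb hab
  exfalso
  have hl := congrArg List.length hab
  simp at hl
  have ha' : 1 ≤ a.length := List.length_pos_iff.mpr ha
  have hb' : 1 ≤ b.length := List.length_pos_iff.mpr hb
  omega

/-- A Lyndon word is `Slt`-smaller than each of its proper nonempty suffixes. -/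
lemma IsLyndon.slt_suffix {w u v : List X} (hw : IsLyndon w) (hu : u ≠ []) (hv : v ≠ [])
    (heq : w = u ++ v) : Slt w v := by
  have h1 : List.Lex (· < ·) w (v ++ u) := hw.2 u v hu hv heq
  set w1 := w.take v.length with hw1
  set w2 := w.drop v.length with hw2
  have hsplit : w = w1 ++ w2 := (List.take_append_drop _ _).symm
  have hlenw : w.length = u.length + v.length := by rw [heq]; simp
  have hlen1 : w1.length = v.length := by
    rw [hw1, List.length_take]
    omega
  have h1' : List.Lex (· < ·) (w1 ++ w2) (v ++ u) := hsplit ▸ h1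
  rcases slt_or_eq_of_lex_append w2 u hlen1 h1' with hs | hs
  · have h2 := hs.append w2 ([] : List X)
    rw [List.append_nil] at h2
    rw [hsplit]
    exact h2
  · -- w1 = v, so w = v ++ w2
    exfalso
    have hw2ne : w2 ≠ [] := by
      intro h
      have : w.length = w1.length := by rw [hsplit, h]; simp
      have : u.length = 0 := by omega
      exact hu (List.length_eq_zero_iff.mp this)
    have hwsplit : w = v ++ w2 := by rw [hsplit, hs]
    have h2 : List.Lex (· < ·) w (w2 ++ v) := hw.2 v w2 hv hw2ne hwsplit
    have hlen2 : w2.length = u.length := by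
      have : w.length = w1.length + w2.length := by rw [hsplit]; simp
      omega
    have h3 : List.Lex (· < ·) w2 u := lex_of_prepend v (hwsplit ▸ h1)
    have h4 : List.Lex (· < ·) (u ++ v) (w2 ++ v) := heq ▸ h2
    have h3' : List.Lex (· < ·) (w2 ++ ([] : List X)) (u ++ ([] : List X)) := by
      simpa using h3
    rcases slt_or_eq_of_lex_append ([] : List X) ([] : List X) hlen2 h3' with h5 | h5
    · rcases slt_or_eq_of_lex_append v v hlen2.symm h4 with h6 | h6
      · exact slt_irrefl u (h6.trans h5)
      · exact slt_irrefl u (h6 ▸ h5)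
    · rcases slt_or_eq_of_lex_append v v hlen2.symm h4 with h6 | h6
      · exact slt_irrefl u (h5 ▸ h6)
      · exact lex_irrefl u (h5 ▸ h3)

lemma IsLyndon.concat {u v : List X} (hu : IsLyndon u) (hv : IsLyndon v)
    (huv : List.Lex (· < ·) u v) : IsLyndon (u ++ v) := by
  have hboundary : List.Lex (· < ·) (u ++ v) (v ++ u) := by
    rcases lex_cases huv with h | ⟨z, hz, hvz⟩
    · exact (h.append v u).lex
    · rw [hvz, List.append_assoc]
      refine lex_prepend u ?_
      rw [← hvz]
      have hzz := (hv.slt_suffix hu.1 hz hvz).append ([] : List X) u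
      rw [List.append_nil] at hzz
      exact hzz.lex
  refine ⟨by simp [hu.1], ?_⟩
  intro a b ha hb hab
  rcases List.append_eq_append_iff.mp hab.symm with ⟨k, hk1, hk2⟩ | ⟨k, hk1, hk2⟩
  · -- u = a ++ k, b = k ++ v : split inside u (or at boundary)
    rcases eq_or_ne k [] with rfl | hk
    · simp only [List.append_nil] at hk1
      simp only [List.nil_append] at hk2
      rw [hk2, ← hk1]
      exact hboundary
    · have huk : Slt u k := hu.slt_suffix ha hk hk1
      have h' := huk.append v (v ++ a)
      rw [hk2, List.append_assoc]
      exact h'.lex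
  · -- a = u ++ k, v = k ++ b : split inside v (or at boundary)
    rcases eq_or_ne k [] with rfl | hk
    · simp only [List.append_nil] at hk1
      simp only [List.nil_append] at hk2
      rw [hk1, ← hk2]
      exact hboundary
    · have hvb : Slt v b := hv.slt_suffix hk hb hk2
      have hwb : Slt (u ++ v) b := by
        rcases lex_cases huv with h | ⟨z, hz, hvz⟩
        · have h' := h.append v ([] : List X)
          rw [List.append_nil] at h'
          exact h'.trans hvb
        · have h' : Slt v z := hv.slt_suffix hu.1 hz hvz
          have h'' : Slt (u ++ v) (u ++ z) := h'.prepend u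
          rw [← hvz] at h''
          exact h''.trans hvb
      have hfin := hwb.append ([] : List X) a
      rw [List.append_nil] at hfin
      exact hfin.lex

end
theorem stmt19 {X : Type*} [LinearOrder X] (x y : X) (hxy : x < y)
    (f : ℕ → List X)
    (hf0 : f 0 = [x]) (hf1 : f 1 = [y])
    (heven : ∀ n : ℕ, 1 ≤ n → f (2 * n) = f (2 * n - 2) ++ f (2 * n - 1))
    (hodd : ∀ n : ℕ, 1 ≤ n → f (2 * n + 1) = f (2 * n) ++ f (2 * n - 1)) :
    (∀ n : ℕ, IsLyndon (f n)) ∧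
    (∀ n : ℕ, (f n).length = Nat.fib (n + 1)) ∧
    (∀ m n : ℕ, m < n → List.Lex (· < ·) (f (2 * m)) (f (2 * n))) ∧
    (∀ m n : ℕ, List.Lex (· < ·) (f (2 * m)) (f (2 * n + 1))) ∧
    (∀ m n : ℕ, m < n → List.Lex (· < ·) (f (2 * n + 1)) (f (2 * m + 1))) := by
  have fe : ∀ a b : ℕ, a = b → f a = f b := fun a b h => by rw [h]
  -- the two basic recurrences in convenient form
  have hA : ∀ n : ℕ, f (2 * n + 2) = f (2 * n) ++ f (2 * n + 1) := by
    intro n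
    have h := heven (n + 1) (by omega)
    rwa [fe (2 * (n + 1)) (2 * n + 2) (by ring),
      fe (2 * (n + 1) - 2) (2 * n) (by omega),
      fe (2 * (n + 1) - 1) (2 * n + 1) (by omega)] at h
  have hB : ∀ n : ℕ, f (2 * n + 3) = f (2 * n + 2) ++ f (2 * n + 1) := by
    intro n
    have h := hodd (n + 1) (by omega)
    rwa [fe (2 * (n + 1) + 1) (2 * n + 3) (by ring),
      fe (2 * (n + 1)) (2 * n + 2) (by ring),
      fe (2 * (n + 1) - 1) (2 * n + 1) (by omega)] at h
  have hA2 : ∀ n : ℕ, f (2 * n + 4) = f (2 * n + 2) ++ f (2 * n + 3) := by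
    intro n
    have h := hA (n + 1)
    rwa [fe (2 * (n + 1) + 2) (2 * n + 4) (by ring),
      fe (2 * (n + 1) + 1) (2 * n + 3) (by ring),
      fe (2 * (n + 1)) (2 * n + 2) (by ring)] at h
  have hB2 : ∀ n : ℕ, f (2 * n + 5) = f (2 * n + 4) ++ f (2 * n + 3) := by
    intro n
    have h := hB (n + 1)
    rwa [fe (2 * (n + 1) + 3) (2 * n + 5) (by ring),
      fe (2 * (n + 1) + 2) (2 * n + 4) (by ring),
      fe (2 * (n + 1) + 1) (2 * n + 3) (by ring)] at h
  -- lengths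
  have hlen : ∀ n : ℕ,
      (f (2 * n)).length = Nat.fib (2 * n + 1) ∧
      (f (2 * n + 1)).length = Nat.fib (2 * n + 2) := by
    intro n
    induction n with
    | zero => simp [hf0, hf1]
    | succ n ih =>
        have e1 : (f (2 * n + 2)).length = Nat.fib (2 * n + 3) := by
          have hfib := Nat.fib_add_two (n := 2 * n + 1)
          rw [show 2 * n + 1 + 2 = 2 * n + 3 by ring,
            show 2 * n + 1 + 1 = 2 * n + 2 by ring] at hfib
          rw [hA n, List.length_append, ih.1, ih.2]
          omega
        have e2 : (f (2 * n + 3)).length = Nat.fib (2 * n + 4) := by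
          have hfib := Nat.fib_add_two (n := 2 * n + 2)
          rw [show 2 * n + 2 + 2 = 2 * n + 4 by ring,
            show 2 * n + 2 + 1 = 2 * n + 3 by ring] at hfib
          rw [hB n, List.length_append, e1, ih.2]
          omega
        constructor
        · rw [fe (2 * (n + 1)) (2 * n + 2) (by ring)]
          rw [show 2 * (n + 1) + 1 = 2 * n + 3 by ring]
          exact e1
        · rw [fe (2 * (n + 1) + 1) (2 * n + 3) (by ring)]
          rw [show 2 * (n + 1) + 2 = 2 * n + 4 by ring]
          exact e2
  have hneA : ∀ n : ℕ, f (2 * n) ≠ [] := by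
    intro n h
    have h1 := (hlen n).1
    rw [h] at h1
    have := Nat.fib_pos.mpr (show 0 < 2 * n + 1 by omega)
    simp at h1
    omega
  have hneB : ∀ n : ℕ, f (2 * n + 1) ≠ [] := by
    intro n h
    have h1 := (hlen n).2
    rw [h] at h1
    have := Nat.fib_pos.mpr (show 0 < 2 * n + 2 by omega)
    simp at h1
    omega
  -- Slt (B (n+1)) (B n)
  have hBB : ∀ n : ℕ, Slt (f (2 * n + 3)) (f (2 * n + 1)) := by
    intro n
    induction n with
    | zero =>
        rw [fe (2 * 0 + 3) 3 rfl, fe (2 * 0 + 1) 1 rfl,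
          show (3 : ℕ) = 2 * 0 + 3 from rfl, hB 0, hA 0,
          fe (2 * 0) 0 rfl, fe (2 * 0 + 1) 1 rfl, hf0, hf1]
        exact ⟨[], x, y, [y, y], [], hxy, by simp, by simp⟩
    | succ n ih =>
        rw [fe (2 * (n + 1) + 3) (2 * n + 5) (by ring),
          fe (2 * (n + 1) + 1) (2 * n + 3) (by ring),
          hB2 n, hA2 n, List.append_assoc]
        conv_rhs => rw [hB n]
        refine Slt.prepend _ ?_
        have h := ih.append (f (2 * n + 3)) ([] : List X)
        rwa [List.append_nil] at h
  -- Slt (A (n+1)) (B n)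
  have hAB : ∀ n : ℕ, Slt (f (2 * n + 2)) (f (2 * n + 1)) := by
    intro n
    cases n with
    | zero =>
        rw [fe (2 * 0 + 2) 2 rfl, fe (2 * 0 + 1) 1 rfl,
          show (2 : ℕ) = 2 * 0 + 2 from rfl, hA 0,
          fe (2 * 0) 0 rfl, fe (2 * 0 + 1) 1 rfl, hf0, hf1]
        exact ⟨[], x, y, [y], [], hxy, by simp, by simp⟩
    | succ n =>
        rw [fe (2 * (n + 1) + 2) (2 * n + 4) (by ring),
          fe (2 * (n + 1) + 1) (2 * n + 3) (by ring),
          hA2 n]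
        conv_rhs => rw [hB n]
        exact Slt.prepend _ (hBB n)
  -- Lex (A n) (B n)
  have hLexAB : ∀ n : ℕ, List.Lex (· < ·) (f (2 * n)) (f (2 * n + 1)) := by
    intro n
    cases n with
    | zero =>
        rw [fe (2 * 0) 0 rfl, fe (2 * 0 + 1) 1 rfl, hf0, hf1]
        exact List.Lex.rel hxy
    | succ n =>
        rw [fe (2 * (n + 1)) (2 * n + 2) (by ring),
          fe (2 * (n + 1) + 1) (2 * n + 3) (by ring), hB n]
        exact lex_append_right _ (hneB n)
  -- Lyndon property
  have hLyndon : ∀ n : ℕ, IsLyndon (f (2 * n)) ∧ IsLyndon (f (2 * n + 1)) := by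
    intro n
    induction n with
    | zero =>
        rw [fe (2 * 0) 0 rfl, fe (2 * 0 + 1) 1 rfl, hf0, hf1]
        exact ⟨isLyndon_singleton x, isLyndon_singleton y⟩
    | succ n ih =>
        have hAly : IsLyndon (f (2 * n + 2)) := by
          rw [hA n]
          exact ih.1.concat ih.2 (hLexAB n)
        have hBly : IsLyndon (f (2 * n + 3)) := by
          rw [hB n]
          exact hAly.concat ih.2 (hAB n).lex
        constructor
        · rw [fe (2 * (n + 1)) (2 * n + 2) (by ring)]
          exact hAly
        · rw [fe (2 * (n + 1) + 1) (2 * n + 3) (by ring)]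
          exact hBly
  -- A m is a prefix of A (m+k)
  have hpre : ∀ m k : ℕ, ∃ w, f (2 * (m + k)) = f (2 * m) ++ w ∧ (k ≠ 0 → w ≠ []) := by
    intro m k
    induction k with
    | zero => exact ⟨[], by simp, fun h => absurd rfl h⟩
    | succ k ih =>
        obtain ⟨w, hw, _⟩ := ih
        refine ⟨w ++ f (2 * (m + k) + 1), ?_, fun _ hc => ?_⟩
        · rw [fe (2 * (m + (k + 1))) (2 * (m + k) + 2) (by ring), hA (m + k), hw,
            List.append_assoc]
        · rw [List.append_eq_nil_iff] at hc
          exact hneB (m + k) hc.2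
  refine ⟨?_, ?_, ?_, ?_, ?_⟩
  · intro n
    rcases Nat.even_or_odd' n with ⟨k, rfl | rfl⟩
    · exact (hLyndon k).1
    · exact (hLyndon k).2
  · intro n
    rcases Nat.even_or_odd' n with ⟨k, rfl | rfl⟩
    · exact (hlen k).1
    · rw [show 2 * k + 1 + 1 = 2 * k + 2 from rfl]
      exact (hlen k).2
  · intro m n hmn
    obtain ⟨k, rfl⟩ : ∃ k, n = m + (k + 1) := ⟨n - m - 1, by omega⟩
    obtain ⟨w, hw, hwne⟩ := hpre m (k + 1)
    rw [hw]
    exact lex_append_right _ (hwne (by omega))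
  · intro m n
    rcases le_or_gt m n with hmn | hmn
    · cases n with
      | zero =>
          have hm : m = 0 := by omega
          subst hm
          rw [fe (2 * 0) 0 rfl, fe (2 * 0 + 1) 1 rfl, hf0, hf1]
          exact List.Lex.rel hxy
      | succ k =>
          rw [fe (2 * (k + 1) + 1) (2 * k + 3) (by ring), hB k]
          obtain ⟨w, hw, _⟩ := hpre m (k + 1 - m)
          rw [fe (2 * k + 2) (2 * (m + (k + 1 - m))) (by omega), hw, List.append_assoc]
          refine lex_append_right _ ?_
          intro hc
          rw [List.append_eq_nil_iff] at hc
          exact hneB k hc.2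
    · obtain ⟨w, hw, _⟩ := hpre (n + 1) (m - (n + 1))
      rw [fe (2 * m) (2 * ((n + 1) + (m - (n + 1)))) (by omega), hw,
        fe (2 * (n + 1)) (2 * n + 2) (by ring)]
      have h := (hAB n).append w ([] : List X)
      rw [List.append_nil] at h
      exact h.lex
  · intro m n hmn
    have hchain : ∀ k : ℕ, Slt (f (2 * (m + k) + 3)) (f (2 * m + 1)) := by
      intro k
      induction k with
      | zero => exact fe (2 * (m + 0) + 3) (2 * m + 3) (by ring) ▸ hBB m
      | succ k ih =>
          have h := hBB (m + k + 1)
          rw [fe (2 * (m + k + 1) + 3) (2 * (m + (k + 1)) + 3) (by ring),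
            fe (2 * (m + k + 1) + 1) (2 * (m + k) + 3) (by ring)] at h
          exact h.trans ih
    have h := hchain (n - m - 1)
    rw [fe (2 * (m + (n - m - 1)) + 3) (2 * n + 1) (by omega)] at h
    exact h.lex
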